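/- Let R be a commutative ring and A a commutative R-algebra admitting a separability idempotent e ∈ A ⊗[R] A. Then e is an idempotent element of the ring A ⊗[R] A, and the multiplication map A ⊗[R] A → A (the R-algebra homomorphism determined by a ⊗ₜ b ↦ a * b) exhibits A as the localization of A ⊗[R] A away from e: regarding A as an (A ⊗[R] A)-algebra via the multiplication map, `IsLocalization.Away e A` holds. -/

import Mathlib

open scoped TensorProduct

/-- If `e` is a separability idempotent of a commutative `R`-algebra `A`, then `e` is an
idempotent element of `A ⊗[R] A` and the multiplication map `A ⊗[R] A → A` exhibits `A`
as the localization of `A ⊗[R] A` away from `e`. -/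
theorem separabilityIdempotent_isLocalization_away {R A : Type*} [CommRing R] [CommRing A]
    [Algebra R A] (e : A ⊗[R] A)
    (he₁ : LinearMap.mul' R A e = 1)
    (he₂ : ∀ a : A, (a ⊗ₜ[R] (1 : A)) * e = e * ((1 : A) ⊗ₜ[R] a)) :
    IsIdempotentElem e ∧
      (letI : Algebra (A ⊗[R] A) A :=
        (Algebra.TensorProduct.lmul' R (S := A)).toRingHom.toAlgebra
       IsLocalization.Away e A) := by
  have key : ∀ t : A ⊗[R] A, e * t = e * ((1 : A) ⊗ₜ[R] (LinearMap.mul' R A t)) := by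
    intro t
    induction t using TensorProduct.induction_on with
    | zero => simp
    | tmul a b =>
        have : (a ⊗ₜ[R] b : A ⊗[R] A) = (a ⊗ₜ[R] (1 : A)) * ((1 : A) ⊗ₜ[R] b) := by
          simp [Algebra.TensorProduct.tmul_mul_tmul]
        rw [this, ← mul_assoc, mul_comm e (a ⊗ₜ[R] (1 : A)), he₂ a, mul_assoc,
          Algebra.TensorProduct.tmul_mul_tmul]
        simp
    | add x y hx hy =>
        rw [mul_add, hx, hy, map_add, TensorProduct.tmul_add, mul_add]
  have hidem : IsIdempotentElem e := by
    have := key e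
    rwa [he₁, ← Algebra.TensorProduct.one_def, mul_one] at this
  refine ⟨hidem, ?_⟩
  letI : Algebra (A ⊗[R] A) A :=
    (Algebra.TensorProduct.lmul' R (S := A)).toRingHom.toAlgebra
  have halg : ∀ t : A ⊗[R] A, algebraMap (A ⊗[R] A) A t = LinearMap.mul' R A t := fun t => rfl
  constructor
  constructor
  · rintro ⟨s, n, rfl⟩
    rw [map_pow, halg e, he₁, one_pow]
    exact isUnit_one
  · intro z
    refine ⟨⟨z ⊗ₜ[R] (1 : A), 1⟩, ?_⟩
    simp [halg, Algebra.TensorProduct.one_def]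
  · intro x y h
    refine ⟨⟨e, 1, pow_one e⟩, ?_⟩
    simp only
    rw [key x, key y]
    simp only [halg] at h
    rw [h]
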